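/- arXiv:0911.1296 — 4 statements merged into one kernel-verified Lean document; each statement's English description precedes it below -/
import Mathlib

section
/- Let G be a finitely generated group and let Γ' ⊆ Γ be two subgroups of G with [Γ : Γ'] = t < ∞. Then for every g ∈ G, (1/t)·[Γ : Γ ∩ Γ^g] ≤ [Γ' : Γ' ∩ Γ'^g] ≤ t·[Γ : Γ ∩ Γ^g]. Equivalently, for every n, Comm_{≤n}(Γ,G) ⊆ Comm_{≤tn}(Γ',G) and Comm_{≤n}(Γ',G) ⊆ Comm_{≤tn}(Γ,G). -/
section CommensurizerDefs

variable {G : Type*} [Group G]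

/-- The conjugate subgroup `A ^ g = g⁻¹ A g`. -/
def conjSubgroup (g : G) (A : Subgroup G) : Subgroup G :=
  A.map (MulAut.conj g⁻¹).toMonoidHom

/-- `χ_{A,G}(g) = [A : A ∩ A^g]` (with the convention that this is `0` if the index
is infinite). -/
noncomputable def commIndex (A : Subgroup G) (g : G) : ℕ :=
  (conjSubgroup g A).relIndex A

/-- `g` commensurates `A` if `A ∩ A^g` has finite index in both `A` and `A^g`. -/
def Commensurates (A : Subgroup G) (g : G) : Prop :=
  (conjSubgroup g A).relIndex A ≠ 0 ∧ A.relIndex (conjSubgroup g A) ≠ 0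

/-- `Comm_{≤ n}(A, G) = ⋃_{l ≤ n} Comm_l(A, G)`. -/
def commSetLE (A : Subgroup G) (n : ℕ) : Set G :=
  {g : G | Commensurates A g ∧ commIndex A g ≤ n}

end CommensurizerDefs

section Aux

variable {G : Type*} [Group G]

lemma conjSubgroup_conjSubgroup (g h : G) (A : Subgroup G) :
    conjSubgroup g (conjSubgroup h A) = conjSubgroup (h * g) A := by
  simp only [conjSubgroup, Subgroup.map_map]
  congr 1
  ext x
  simp [mul_assoc]

lemma conjSubgroup_one (A : Subgroup G) : conjSubgroup 1 A = A := by
  simp only [conjSubgroup]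
  ext x
  simp

lemma relindex_conj (A B : Subgroup G) (g : G) :
    (conjSubgroup g A).relIndex (conjSubgroup g B) = A.relIndex B := by
  unfold conjSubgroup
  have h1 : A.map (MulAut.conj g⁻¹).toMonoidHom
      = Subgroup.comap ((MulAut.conj g⁻¹).symm.toMonoidHom) A := by
    ext x
    simp only [MulEquiv.toMonoidHom_eq_coe, Subgroup.mem_map, MonoidHom.coe_coe,
      Subgroup.mem_comap, MulAut.conj_symm_apply, MulAut.conj_inv_apply, MulAut.conj_apply]
    constructor
    · rintro ⟨y, hy, rfl⟩; simpa [mul_assoc] using hy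
    · intro hx; exact ⟨g⁻¹⁻¹ * x * g⁻¹, hx, by group⟩
  rw [h1, Subgroup.relIndex_comap]
  congr 1
  rw [Subgroup.map_map]
  ext x
  simp [mul_assoc]

lemma relindex_conjSubgroup_self (A : Subgroup G) (g : G) :
    A.relIndex (conjSubgroup g A) = commIndex A g⁻¹ := by
  have := relindex_conj (conjSubgroup g⁻¹ A) A g
  rw [conjSubgroup_conjSubgroup, inv_mul_cancel, conjSubgroup_one] at this
  rw [commIndex, ← this]

lemma commIndex_key {Γ Γ' : Subgroup G} (hle : Γ' ≤ Γ) {t : ℕ}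
    (ht : Γ'.relIndex Γ = t) (ht0 : t ≠ 0) (g : G) :
    commIndex Γ g ≤ t * commIndex Γ' g ∧ commIndex Γ' g ≤ t * commIndex Γ g := by
  set C := conjSubgroup g Γ with hC
  set C' := conjSubgroup g Γ' with hC'
  have hCC : C' ≤ C := Subgroup.map_mono hle
  have htC : C'.relIndex C = t := by rw [hC, hC', relindex_conj]; exact ht
  set A := Γ ⊓ C with hA
  set A' := Γ' ⊓ C' with hA'
  have hA'A : A' ≤ A := inf_le_inf hle hCC
  have hAΓ : A ≤ Γ := inf_le_left
  have hAC : A ≤ C := inf_le_right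
  have hA'Γ' : A' ≤ Γ' := inf_le_left
  have hχ : A.relIndex Γ = commIndex Γ g := Subgroup.inf_relIndex_left Γ C
  have hχ' : A'.relIndex Γ' = commIndex Γ' g := Subgroup.inf_relIndex_left Γ' C'
  have eq1 : A'.relIndex A * A.relIndex Γ = A'.relIndex Γ :=
    Subgroup.relIndex_mul_relIndex _ _ _ hA'A hAΓ
  have eq2 : A'.relIndex Γ' * Γ'.relIndex Γ = A'.relIndex Γ :=
    Subgroup.relIndex_mul_relIndex _ _ _ hA'Γ' hle
  set m := A'.relIndex A with hm
  have hΓ'A : Γ'.relIndex A ≠ 0 := by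
    intro h
    exact ht0 (ht ▸ Subgroup.relIndex_eq_zero_of_le_right hAΓ h)
  have hC'A : C'.relIndex A ≠ 0 := by
    intro h
    exact ht0 (htC ▸ Subgroup.relIndex_eq_zero_of_le_right hAC h)
  have hm0 : m ≠ 0 := Subgroup.relIndex_inf_ne_zero hΓ'A hC'A
  have hmle : m ≤ t * t := by
    calc m ≤ Γ'.relIndex A * C'.relIndex A := Subgroup.relIndex_inf_le
    _ ≤ t * t := by
        refine Nat.mul_le_mul ?_ ?_
        · exact ht ▸ Subgroup.relIndex_le_of_le_right hAΓ (ht ▸ ht0)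
        · exact htC ▸ Subgroup.relIndex_le_of_le_right hAC (htC ▸ ht0)
  have key : m * commIndex Γ g = commIndex Γ' g * t := by
    rw [hχ] at eq1
    rw [hχ', ht] at eq2
    exact eq1.trans eq2.symm
  constructor
  · calc commIndex Γ g ≤ m * commIndex Γ g :=
        Nat.le_mul_of_pos_left _ (Nat.pos_of_ne_zero hm0)
    _ = commIndex Γ' g * t := key
    _ = t * commIndex Γ' g := Nat.mul_comm _ _
  · have : t * commIndex Γ' g ≤ t * (t * commIndex Γ g) := by
      calc t * commIndex Γ' g = commIndex Γ' g * t := Nat.mul_comm _ _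
      _ = m * commIndex Γ g := key.symm
      _ ≤ (t * t) * commIndex Γ g := Nat.mul_le_mul_right _ hmle
      _ = t * (t * commIndex Γ g) := Nat.mul_assoc _ _ _
    exact Nat.le_of_mul_le_mul_left this (Nat.pos_of_ne_zero ht0)

end Aux

/-- **Proposition.** Let `G` be a finitely generated group and `Γ' ⊆ Γ` subgroups of `G`
with `[Γ : Γ'] = t < ∞`. Then for every `g ∈ G`,
`(1/t)·[Γ : Γ ∩ Γ^g] ≤ [Γ' : Γ' ∩ Γ'^g] ≤ t·[Γ : Γ ∩ Γ^g]`; equivalently, for every `n`,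
`Comm_{≤n}(Γ,G) ⊆ Comm_{≤tn}(Γ',G)` and `Comm_{≤n}(Γ',G) ⊆ Comm_{≤tn}(Γ,G)`.
(Indices are encoded in `ℕ` with `0` standing for an infinite index; the two displayed
inequalities together express exactly the stated estimate, including the fact that the
two indices are finite simultaneously.) -/
theorem commIndex_le_of_le_of_relindex {G : Type*} [Group G] (hfg : Group.FG G)
    (Γ Γ' : Subgroup G) (hle : Γ' ≤ Γ) (t : ℕ) (ht : Γ'.relIndex Γ = t) (ht0 : t ≠ 0) :
    (∀ g : G,
        commIndex Γ g ≤ t * commIndex Γ' g ∧ commIndex Γ' g ≤ t * commIndex Γ g) ∧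
    (∀ n : ℕ,
        commSetLE Γ n ⊆ commSetLE Γ' (t * n) ∧ commSetLE Γ' n ⊆ commSetLE Γ (t * n)) := by
  have hkey : ∀ g : G,
      commIndex Γ g ≤ t * commIndex Γ' g ∧ commIndex Γ' g ≤ t * commIndex Γ g :=
    fun g => commIndex_key hle ht ht0 g
  refine ⟨hkey, fun n => ⟨?_, ?_⟩⟩
  · rintro g ⟨⟨h1, h2⟩, hn⟩
    rw [relindex_conjSubgroup_self] at h2
    have h1' : commIndex Γ' g ≠ 0 := by
      intro h
      apply h1
      have := (hkey g).1
      rw [h, Nat.mul_zero] at this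
      exact Nat.le_zero.mp this
    have h2' : commIndex Γ' g⁻¹ ≠ 0 := by
      intro h
      apply h2
      have := (hkey g⁻¹).1
      rw [h, Nat.mul_zero] at this
      exact Nat.le_zero.mp this
    refine ⟨⟨h1', ?_⟩, le_trans (hkey g).2 (Nat.mul_le_mul_left t hn)⟩
    rw [relindex_conjSubgroup_self]
    exact h2'
  · rintro g ⟨⟨h1, h2⟩, hn⟩
    rw [relindex_conjSubgroup_self] at h2
    have h1' : commIndex Γ g ≠ 0 := by
      intro h
      apply h1
      have := (hkey g).2
      rw [h, Nat.mul_zero] at this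
      exact Nat.le_zero.mp this
    have h2' : commIndex Γ g⁻¹ ≠ 0 := by
      intro h
      apply h2
      have := (hkey g⁻¹).2
      rw [h, Nat.mul_zero] at this
      exact Nat.le_zero.mp this
    refine ⟨⟨h1', ?_⟩, le_trans (hkey g).1 (Nat.mul_le_mul_left t hn)⟩
    rw [relindex_conjSubgroup_self]
    exact h2'
end

section
/- Let A ⊆ G and B ⊆ H be pairs of groups and let n be a positive integer. Then Comm_n(A × B, G × H) = ⊔_{a | n} Comm_a(A,G) × Comm_{n/a}(B,H); that is, (g,h) ∈ Comm_n(A × B, G × H) if and only if there is a (unique) divisor a of n with g ∈ Comm_a(A,G) and h ∈ Comm_{n/a}(B,H). -/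
section CommensurizerDefs

variable {G : Type*} [Group G]

/-- `Comm_n(A, G)`. -/
def commSet (A : Subgroup G) (n : ℕ) : Set G :=
  {g : G | Commensurates A g ∧ commIndex A g = n}

end CommensurizerDefs

section Aux

variable {G H : Type*} [Group G] [Group H]

lemma range_prodMap_subtype (K₁ : Subgroup G) (K₂ : Subgroup H) :
    (K₁.subtype.prodMap K₂.subtype).range = K₁.prod K₂ := by
  ext ⟨x, y⟩
  simp only [MonoidHom.mem_range, Subgroup.mem_prod, Prod.ext_iff]
  constructor
  · rintro ⟨⟨a, b⟩, h1, h2⟩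
    exact ⟨h1 ▸ a.2, h2 ▸ b.2⟩
  · rintro ⟨hx, hy⟩
    exact ⟨(⟨x, hx⟩, ⟨y, hy⟩), rfl, rfl⟩

lemma relindex_prod (H₁ K₁ : Subgroup G) (H₂ K₂ : Subgroup H) :
    (H₁.prod H₂).relIndex (K₁.prod K₂) = H₁.relIndex K₁ * H₂.relIndex K₂ := by
  have h1 : ((H₁.prod H₂).comap (K₁.subtype.prodMap K₂.subtype)).index
      = (H₁.prod H₂).relIndex (K₁.prod K₂) := by
    rw [Subgroup.index_comap, range_prodMap_subtype]
  rw [← h1, MonoidHom.prodMap_comap_prod, Subgroup.index_prod]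
  rfl

lemma conjSubgroup_prod (A : Subgroup G) (B : Subgroup H) (g : G) (h : H) :
    conjSubgroup (g, h) (A.prod B) = (conjSubgroup g A).prod (conjSubgroup h B) := by
  ext ⟨x, y⟩
  simp only [conjSubgroup, Subgroup.mem_map, Subgroup.mem_prod, MulEquiv.coe_toMonoidHom,
    MulAut.conj_apply, Prod.ext_iff]
  constructor
  · rintro ⟨⟨a, b⟩, ⟨ha, hb⟩, h1, h2⟩
    simp only [Prod.inv_mk, Prod.mk_mul_mk] at h1 h2
    exact ⟨⟨a, ha, h1⟩, ⟨b, hb, h2⟩⟩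
  · rintro ⟨⟨a, ha, h1⟩, ⟨b, hb, h2⟩⟩
    exact ⟨(a, b), ⟨ha, hb⟩, h1, h2⟩

lemma commIndex_prod (A : Subgroup G) (B : Subgroup H) (g : G) (h : H) :
    commIndex (A.prod B) (g, h) = commIndex A g * commIndex B h := by
  rw [commIndex, conjSubgroup_prod, relindex_prod]; rfl

lemma commensurates_prod (A : Subgroup G) (B : Subgroup H) (g : G) (h : H) :
    Commensurates (A.prod B) (g, h) ↔ Commensurates A g ∧ Commensurates B h := by
  rw [Commensurates, conjSubgroup_prod, relindex_prod, relindex_prod]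
  simp only [Commensurates, Nat.mul_ne_zero_iff]
  tauto

end Aux

/-- **Lemma (commensurizers of products).** Let `A ⊆ G` and `B ⊆ H` be pairs of groups
and let `n` be a positive integer. Then
`Comm_n(A × B, G × H) = ⊔_{a ∣ n} Comm_a(A, G) × Comm_{n/a}(B, H)`:
a pair `(g, h)` lies in `Comm_n(A × B, G × H)` if and only if there is a (unique)
divisor `a` of `n` with `g ∈ Comm_a(A, G)` and `h ∈ Comm_{n/a}(B, H)`. -/
theorem commSet_prod {G H : Type*} [Group G] [Group H]
    (A : Subgroup G) (B : Subgroup H) (n : ℕ) (hn : 0 < n) (g : G) (h : H) :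
    (g, h) ∈ commSet (A.prod B) n ↔
      ∃! a : ℕ, a ∣ n ∧ g ∈ commSet A a ∧ h ∈ commSet B (n / a) := by
  simp only [commSet, Set.mem_setOf_eq, commensurates_prod, commIndex_prod]
  constructor
  · rintro ⟨⟨hg, hh⟩, hmul⟩
    have ha : commIndex A g ≠ 0 := hg.1
    refine ⟨commIndex A g, ⟨⟨commIndex B h, hmul.symm⟩, ⟨hg, rfl⟩, ⟨hh, ?_⟩⟩, ?_⟩
    · rw [← hmul, Nat.mul_div_cancel_left _ (Nat.pos_of_ne_zero ha)]
    · rintro a ⟨-, ⟨-, rfl⟩, -⟩; rfl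
  · rintro ⟨a, ⟨⟨k, hk⟩, ⟨hg, rfl⟩, ⟨hh, hB⟩⟩, -⟩
    refine ⟨⟨hg, hh⟩, ?_⟩
    have ha : commIndex A g ≠ 0 := hg.1
    rw [hB, hk, Nat.mul_div_cancel_left _ (Nat.pos_of_ne_zero ha)]
end

section
/- Let p be a prime and n ≥ 1. Then c_{p^n}(H(ℤ_p), H(ℚ_p)) = p^{2n}(1 − p^{−2}) = p^{2n} − p^{2n−2}; moreover c_m(H(ℤ_p), H(ℚ_p)) = 0 if m > 1 is not a power of p. -/
section CommensurizerDefs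

variable {G : Type*} [Group G]

/-- The orbits of the left multiplication action of the normalizer `N_G(A)`
on `Comm_n(A, G)`. -/
def commOrbits (A : Subgroup G) (n : ℕ) : Set (Set G) :=
  {s : Set G | ∃ g ∈ commSet A n, s = (fun x => x * g) '' (Subgroup.normalizer (A : Set G) : Set G)}

/-- `c_n(A, G) = |N_G(A) \ Comm_n(A, G)|`. -/
noncomputable def cCount (A : Subgroup G) (n : ℕ) : ℕ :=
  Nat.card ↥(commOrbits A n)

end CommensurizerDefs

/-- The Heisenberg group over a commutative ring `R`: the group of upper unitriangular
`3 × 3` matrices `[[1, a, c], [0, 1, b], [0, 0, 1]]`, recorded by the triple `(a, b, c)`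
of its above-diagonal entries. -/
@[ext]
structure Heisenberg (R : Type*) where
  a : R
  b : R
  c : R

namespace Heisenberg

variable {R : Type*} [CommRing R]

instance : Mul (Heisenberg R) := ⟨fun x y => ⟨x.a + y.a, x.b + y.b, x.c + y.c + x.a * y.b⟩⟩
instance : One (Heisenberg R) := ⟨⟨0, 0, 0⟩⟩
instance : Inv (Heisenberg R) := ⟨fun x => ⟨-x.a, -x.b, x.a * x.b - x.c⟩⟩

@[simp] theorem mul_a (x y : Heisenberg R) : (x * y).a = x.a + y.a := rfl
@[simp] theorem mul_b (x y : Heisenberg R) : (x * y).b = x.b + y.b := rfl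
@[simp] theorem mul_c (x y : Heisenberg R) : (x * y).c = x.c + y.c + x.a * y.b := rfl
@[simp] theorem one_a : (1 : Heisenberg R).a = 0 := rfl
@[simp] theorem one_b : (1 : Heisenberg R).b = 0 := rfl
@[simp] theorem one_c : (1 : Heisenberg R).c = 0 := rfl
@[simp] theorem inv_a (x : Heisenberg R) : x⁻¹.a = -x.a := rfl
@[simp] theorem inv_b (x : Heisenberg R) : x⁻¹.b = -x.b := rfl
@[simp] theorem inv_c (x : Heisenberg R) : x⁻¹.c = x.a * x.b - x.c := rfl

instance : Group (Heisenberg R) where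
  mul_assoc x y z := by ext <;> simp <;> ring
  one_mul x := by ext <;> simp
  mul_one x := by ext <;> simp
  inv_mul_cancel x := by ext <;> simp [mul_comm]

/-- The group homomorphism `H(R) → H(S)` induced by a ring homomorphism `R → S`. -/
def map {S : Type*} [CommRing S] (f : R →+* S) : Heisenberg R →* Heisenberg S where
  toFun x := ⟨f x.a, f x.b, f x.c⟩
  map_one' := by ext <;> simp
  map_mul' x y := by ext <;> simp

end Heisenberg

/-- `H(ℤ_p)` as a subgroup of `H(ℚ_p)`. -/
noncomputable def heisenbergInt (p : ℕ) [Fact p.Prime] : Subgroup (Heisenberg ℚ_[p]) :=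
  (Heisenberg.map (PadicInt.Coe.ringHom (p := p))).range

namespace HeisAux

variable (p : ℕ) [hp : Fact p.Prime]

/-- `ℤ_p` as an additive subgroup of `ℚ_p`. -/
def Zp : AddSubgroup ℚ_[p] where
  carrier := {x | ‖x‖ ≤ 1}
  add_mem' {a b} ha hb := le_trans (Padic.nonarchimedean a b) (max_le ha hb)
  zero_mem' := by simp
  neg_mem' {a} ha := by simpa using ha

@[simp] lemma mem_Zp {x : ℚ_[p]} : x ∈ Zp p ↔ ‖x‖ ≤ 1 := Iff.rfl

abbrev Q := ℚ_[p] ⧸ Zp p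

noncomputable abbrev mkq : ℚ_[p] → Q p := QuotientAddGroup.mk

lemma mkq_eq_mkq {x y : ℚ_[p]} : mkq p x = mkq p y ↔ ‖x - y‖ ≤ 1 :=
  QuotientAddGroup.eq_iff_sub_mem

lemma mkq_eq_zero {x : ℚ_[p]} : mkq p x = 0 ↔ ‖x‖ ≤ 1 := by
  rw [show (0 : Q p) = mkq p 0 from rfl, mkq_eq_mkq, sub_zero]

variable {p}

lemma mem_A {x : Heisenberg ℚ_[p]} :
    x ∈ heisenbergInt p ↔ ‖x.a‖ ≤ 1 ∧ ‖x.b‖ ≤ 1 ∧ ‖x.c‖ ≤ 1 := by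
  constructor
  · rintro ⟨y, rfl⟩
    exact ⟨y.a.2, y.b.2, y.c.2⟩
  · rintro ⟨ha, hb, hc⟩
    exact ⟨⟨⟨x.a, ha⟩, ⟨x.b, hb⟩, ⟨x.c, hc⟩⟩, rfl⟩

lemma conj_eq (g x : Heisenberg ℚ_[p]) :
    g * x * g⁻¹ = ⟨x.a, x.b, x.c + g.a * x.b - g.b * x.a⟩ := by
  ext <;> simp <;> ring

lemma mem_conj {g x : Heisenberg ℚ_[p]} :
    x ∈ conjSubgroup g (heisenbergInt p) ↔
      ‖x.a‖ ≤ 1 ∧ ‖x.b‖ ≤ 1 ∧ ‖x.c + g.a * x.b - g.b * x.a‖ ≤ 1 := by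
  rw [conjSubgroup, Subgroup.mem_map_equiv]
  have : (MulAut.conj g⁻¹).symm x = g * x * g⁻¹ := by
    simp [MulAut.conj]
  rw [this, conj_eq, mem_A]

/-- ultrametric helper -/
lemma norm_add_le_one {x y : ℚ_[p]} (hx : ‖x‖ ≤ 1) : ‖x + y‖ ≤ 1 ↔ ‖y‖ ≤ 1 := by
  constructor
  · intro h
    have h2 : ‖x + y + (-x)‖ ≤ max ‖x + y‖ ‖(-x)‖ := Padic.nonarchimedean _ _
    have h3 : x + y + (-x) = y := by ring
    rw [h3, norm_neg] at h2
    exact le_trans h2 (max_le h hx)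
  · intro h
    exact le_trans (Padic.nonarchimedean x y) (max_le hx h)

variable (p)

/-- The additive hom `ℤ_p → ℚ_p/ℤ_p`, `t ↦ c·t`. -/
noncomputable def rho (c : ℚ_[p]) : ℤ_[p] →+ Q p where
  toFun t := mkq p (c * (t : ℚ_[p]))
  map_zero' := by simp [mkq_eq_zero]
  map_add' s t := by
    rw [← QuotientAddGroup.mk_add]
    norm_cast
    push_cast
    ring_nf

lemma toZModPow_surjective (k : ℕ) :
    Function.Surjective (PadicInt.toZModPow (p := p) k) := by
  intro x
  haveI : NeZero (p ^ k) := ⟨pow_ne_zero k hp.1.ne_zero⟩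
  refine ⟨((x.val : ℕ) : ℤ_[p]), ?_⟩
  rw [map_natCast]
  exact ZMod.natCast_rightInverse x

lemma ker_rho {c : ℚ_[p]} {k : ℕ} (hc : ‖c‖ = (p : ℝ) ^ k) :
    (rho p c).ker = ((PadicInt.toZModPow (p := p) k).toAddMonoidHom).ker := by
  ext t
  have hppos : (0 : ℝ) < (p : ℝ) := by exact_mod_cast hp.1.pos
  have hcpos : (0 : ℝ) < (p : ℝ) ^ k := by positivity
  have h1 : t ∈ (rho p c).ker ↔ ‖c * (t : ℚ_[p])‖ ≤ 1 := by
    rw [AddMonoidHom.mem_ker]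
    exact mkq_eq_zero p
  have h2 : ‖c * (t : ℚ_[p])‖ = (p : ℝ) ^ k * ‖t‖ := by
    rw [norm_mul, hc, PadicInt.padic_norm_e_of_padicInt]
  have h3 : t ∈ (rho p c).ker ↔ ‖t‖ ≤ (p : ℝ) ^ (-(k : ℤ)) := by
    rw [h1, h2, zpow_neg, zpow_natCast]
    rw [mul_comm, ← le_div_iff₀ hcpos, one_div]
  rw [h3, PadicInt.norm_le_pow_iff_mem_span_pow, AddMonoidHom.mem_ker]
  have := PadicInt.ker_toZModPow (p := p) k
  constructor
  · intro h
    have : t ∈ RingHom.ker (PadicInt.toZModPow (p := p) k) := by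
      rw [this]; exact_mod_cast h
    exact this
  · intro h
    have h4 : t ∈ RingHom.ker (PadicInt.toZModPow (p := p) k) := h
    rw [this] at h4; exact_mod_cast h4

lemma card_range_rho {c : ℚ_[p]} {k : ℕ} (hc : ‖c‖ = (p : ℝ) ^ k) :
    Nat.card (rho p c).range = p ^ k := by
  have e1 := QuotientAddGroup.quotientKerEquivRange (rho p c)
  have e2 := QuotientAddGroup.quotientKerEquivOfSurjective
    ((PadicInt.toZModPow (p := p) k).toAddMonoidHom) (toZModPow_surjective p k)
  rw [← Nat.card_congr e1.toEquiv, ker_rho p hc, Nat.card_congr e2.toEquiv, Nat.card_zmod]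

/-- Norms > 1 in `ℚ_p` are positive integer powers of `p`. -/
lemma exists_pow_norm {c : ℚ_[p]} (hc : 1 < ‖c‖) : ∃ k : ℕ, 1 ≤ k ∧ ‖c‖ = (p : ℝ) ^ k := by
  have hc0 : c ≠ 0 := by
    intro h; rw [h, norm_zero] at hc; linarith
  have hp1 : (1 : ℝ) < p := by exact_mod_cast hp.1.one_lt
  have hv := Padic.norm_eq_zpow_neg_valuation hc0
  have hpos : 0 < -c.valuation := by
    by_contra h
    push_neg at h
    have : (p : ℝ) ^ (-c.valuation) ≤ 1 := zpow_le_one_of_nonpos₀ (le_of_lt hp1) (by linarith)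
    rw [← hv] at this; linarith
  refine ⟨(-c.valuation).toNat, ?_, ?_⟩
  · omega
  · rw [hv, ← zpow_natCast]
    congr 1
    omega

/-- The auxiliary homomorphism computing `[A : A ∩ A^g]`. -/
noncomputable def fHom (g : Heisenberg ℚ_[p]) : ↥(heisenbergInt p) →* Multiplicative (Q p) where
  toFun x := Multiplicative.ofAdd
    (mkq p (g.a * (x : Heisenberg ℚ_[p]).b - g.b * (x : Heisenberg ℚ_[p]).a))
  map_one' := by
    have : (((1 : ↥(heisenbergInt p)) : Heisenberg ℚ_[p])) = 1 := rfl
    simp only [this, Heisenberg.one_a, Heisenberg.one_b, mul_zero, sub_zero]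
    rfl
  map_mul' x y := by
    have hx : ((x * y : ↥(heisenbergInt p)) : Heisenberg ℚ_[p]) = (x : Heisenberg ℚ_[p]) * y := rfl
    simp only [hx, Heisenberg.mul_a, Heisenberg.mul_b]
    rw [← ofAdd_add, ← QuotientAddGroup.mk_add]
    congr 2
    ring

lemma ker_fHom (g : Heisenberg ℚ_[p]) :
    (fHom p g).ker = (conjSubgroup g (heisenbergInt p)).subgroupOf (heisenbergInt p) := by
  ext x
  obtain ⟨ha, hb, hc⟩ := mem_A.mp x.2
  have h1 : x ∈ (fHom p g).ker ↔
      ‖g.a * (x : Heisenberg ℚ_[p]).b - g.b * (x : Heisenberg ℚ_[p]).a‖ ≤ 1 := by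
    rw [MonoidHom.mem_ker]
    constructor
    · intro h
      have : mkq p (g.a * (x : Heisenberg ℚ_[p]).b - g.b * (x : Heisenberg ℚ_[p]).a) = 0 :=
        congrArg Multiplicative.toAdd h
      exact (mkq_eq_zero p).mp this
    · intro h
      have : mkq p (g.a * (x : Heisenberg ℚ_[p]).b - g.b * (x : Heisenberg ℚ_[p]).a) = 0 :=
        (mkq_eq_zero p).mpr h
      exact congrArg Multiplicative.ofAdd this
  rw [h1, Subgroup.mem_subgroupOf, mem_conj]
  have h2 : (x : Heisenberg ℚ_[p]).c + g.a * (x : Heisenberg ℚ_[p]).b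
      - g.b * (x : Heisenberg ℚ_[p]).a
      = (x : Heisenberg ℚ_[p]).c + (g.a * (x : Heisenberg ℚ_[p]).b
        - g.b * (x : Heisenberg ℚ_[p]).a) := by ring
  rw [h2]
  simp only [ha, hb, true_and]
  exact (norm_add_le_one hc).symm

lemma commIndex_eq_card (g : Heisenberg ℚ_[p]) :
    commIndex (heisenbergInt p) g = Nat.card (fHom p g).range := by
  rw [commIndex, Subgroup.relIndex, ← ker_fHom, Subgroup.index_ker]

lemma card_range_fHom (g : Heisenberg ℚ_[p]) {c : ℚ_[p]} (hc0 : c ≠ 0)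
    (hca : ‖g.a‖ ≤ ‖c‖) (hcb : ‖g.b‖ ≤ ‖c‖) (hcase : c = g.a ∨ c = g.b) :
    Nat.card (fHom p g).range = Nat.card (rho p c).range := by
  refine Nat.card_congr (Equiv.subtypeEquiv Multiplicative.toAdd fun y => ?_)
  constructor
  · rintro ⟨x, rfl⟩
    obtain ⟨ha, hb, -⟩ := mem_A.mp x.2
    have hna : ‖g.a / c‖ ≤ 1 := by
      rw [norm_div, div_le_one (norm_pos_iff.mpr hc0)]
      exact hca
    have hnb : ‖g.b / c‖ ≤ 1 := by
      rw [norm_div, div_le_one (norm_pos_iff.mpr hc0)]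
      exact hcb
    refine ⟨⟨g.a / c * (x : Heisenberg ℚ_[p]).b - g.b / c * (x : Heisenberg ℚ_[p]).a, ?_⟩, ?_⟩
    · calc ‖g.a / c * (x : Heisenberg ℚ_[p]).b - g.b / c * (x : Heisenberg ℚ_[p]).a‖
          ≤ max ‖g.a / c * (x : Heisenberg ℚ_[p]).b‖ ‖g.b / c * (x : Heisenberg ℚ_[p]).a‖ := by
            rw [sub_eq_add_neg]
            refine le_trans (Padic.nonarchimedean _ _) ?_
            rw [norm_neg]
        _ ≤ 1 := by
            rw [max_le_iff, norm_mul, norm_mul]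
            constructor
            · exact mul_le_one₀ hna (norm_nonneg _) hb
            · exact mul_le_one₀ hnb (norm_nonneg _) ha
    · show mkq p (c * (g.a / c * (x : Heisenberg ℚ_[p]).b - g.b / c * (x : Heisenberg ℚ_[p]).a))
        = mkq p (g.a * (x : Heisenberg ℚ_[p]).b - g.b * (x : Heisenberg ℚ_[p]).a)
      congr 1
      field_simp
  · rintro ⟨t, ht⟩
    rcases hcase with hcg | hcg
    · refine ⟨⟨⟨0, (t : ℚ_[p]), 0⟩, mem_A.mpr ⟨by simp, by simpa using t.2, by simp⟩⟩, ?_⟩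
      apply Multiplicative.toAdd.injective
      rw [← ht]
      show mkq p (g.a * (t : ℚ_[p]) - g.b * 0) = mkq p (c * (t : ℚ_[p]))
      congr 1
      rw [hcg]
      ring
    · refine ⟨⟨⟨-(t : ℚ_[p]), 0, 0⟩, mem_A.mpr ⟨by simpa using t.2, by simp, by simp⟩⟩, ?_⟩
      apply Multiplicative.toAdd.injective
      rw [← ht]
      show mkq p (g.a * 0 - g.b * (-(t : ℚ_[p]))) = mkq p (c * (t : ℚ_[p]))
      congr 1
      rw [hcg]
      ring

/-- If both entries of `g` are integral then `A ≤ A^g` and the index is `1`. -/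
lemma commIndex_one (g : Heisenberg ℚ_[p]) (ha : ‖g.a‖ ≤ 1) (hb : ‖g.b‖ ≤ 1) :
    commIndex (heisenbergInt p) g = 1 := by
  rw [commIndex, Subgroup.relIndex]
  have : (heisenbergInt p) ≤ conjSubgroup g (heisenbergInt p) := by
    intro x hx
    obtain ⟨hxa, hxb, hxc⟩ := mem_A.mp hx
    refine mem_conj.mpr ⟨hxa, hxb, ?_⟩
    have h1 : ‖g.a * x.b‖ ≤ 1 := by
      rw [norm_mul]; exact mul_le_one₀ ha (norm_nonneg _) hxb
    have h2 : ‖g.b * x.a‖ ≤ 1 := by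
      rw [norm_mul]; exact mul_le_one₀ hb (norm_nonneg _) hxa
    calc ‖x.c + g.a * x.b - g.b * x.a‖
        ≤ max ‖x.c + g.a * x.b‖ ‖g.b * x.a‖ := by
          rw [sub_eq_add_neg]
          refine le_trans (Padic.nonarchimedean _ _) ?_
          rw [norm_neg]
      _ ≤ 1 := max_le (le_trans (Padic.nonarchimedean _ _) (max_le hxc h1)) h2
  rw [Subgroup.subgroupOf_eq_top.mpr this, Subgroup.index_top]

/-- Master lemma: the commensuration index of `g` is `p ^ k` where
`p ^ k = max (1, ‖g.a‖, ‖g.b‖)`. -/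
lemma level_spec (g : Heisenberg ℚ_[p]) :
    ∃ k : ℕ, commIndex (heisenbergInt p) g = p ^ k ∧
      ‖g.a‖ ≤ (p : ℝ) ^ k ∧ ‖g.b‖ ≤ (p : ℝ) ^ k ∧
      ∀ j : ℕ, ‖g.a‖ ≤ (p : ℝ) ^ j → ‖g.b‖ ≤ (p : ℝ) ^ j → k ≤ j := by
  have hp1 : (1 : ℝ) < p := by exact_mod_cast hp.1.one_lt
  by_cases h : ‖g.a‖ ≤ 1 ∧ ‖g.b‖ ≤ 1
  · refine ⟨0, by simpa using commIndex_one p g h.1 h.2, by simpa using h.1,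
      by simpa using h.2, fun j _ _ => Nat.zero_le j⟩
  · set c : ℚ_[p] := if ‖g.a‖ ≤ ‖g.b‖ then g.b else g.a with hcdef
    have hcmax : ‖c‖ = max ‖g.a‖ ‖g.b‖ := by
      rw [hcdef]
      rcases le_or_gt ‖g.a‖ ‖g.b‖ with h1 | h1
      · rw [if_pos h1, max_eq_right h1]
      · rw [if_neg (not_le.mpr h1), max_eq_left h1.le]
    have hc1 : 1 < ‖c‖ := by
      rw [hcmax, lt_max_iff]
      rcases not_and_or.mp h with h1 | h1
      · exact Or.inl (not_le.mp h1)
      · exact Or.inr (not_le.mp h1)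
    have hc0 : c ≠ 0 := by
      intro h0; rw [h0, norm_zero] at hc1; linarith
    obtain ⟨k, hk1, hk⟩ := exists_pow_norm p hc1
    have hca : ‖g.a‖ ≤ ‖c‖ := hcmax ▸ le_max_left _ _
    have hcb : ‖g.b‖ ≤ ‖c‖ := hcmax ▸ le_max_right _ _
    refine ⟨k, ?_, hk ▸ hca, hk ▸ hcb, ?_⟩
    · rw [commIndex_eq_card, card_range_fHom p g hc0 hca hcb ?_, card_range_rho p hk]
      rw [hcdef]
      split_ifs
      · exact Or.inr rfl
      · exact Or.inl rfl
    · intro j hja hjb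
      have : ‖c‖ ≤ (p : ℝ) ^ j := hcmax ▸ max_le hja hjb
      rw [hk] at this
      exact (pow_le_pow_iff_right₀ hp1).mp this

/-- `conjSubgroup g` via `comap`. -/
lemma conjSubgroup_eq_comap {G : Type*} [Group G] (g : G) (A : Subgroup G) :
    conjSubgroup g A = A.comap (MulAut.conj g).toMonoidHom := by
  ext x
  rw [conjSubgroup, Subgroup.mem_map_equiv, Subgroup.mem_comap]
  have h : (MulAut.conj g⁻¹).symm x = (MulAut.conj g).toMonoidHom x := by
    simp [MulAut.conj]
  rw [h]

lemma relindex_conj {G : Type*} [Group G] (A : Subgroup G) (g : G) :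
    A.relIndex (conjSubgroup g A) = commIndex A g⁻¹ := by
  have h := Subgroup.relIndex_comap (G' := G) ((MulAut.conj g⁻¹).toMonoidHom) (H := A) (K := A)
  rw [← conjSubgroup_eq_comap g⁻¹ A] at h
  rw [commIndex, conjSubgroup, ← h]

lemma commensurates (g : Heisenberg ℚ_[p]) : Commensurates (heisenbergInt p) g := by
  constructor
  · obtain ⟨k, hk, -⟩ := level_spec p g
    rw [show (conjSubgroup g (heisenbergInt p)).relIndex (heisenbergInt p)
      = commIndex (heisenbergInt p) g from rfl, hk]
    exact pow_ne_zero k hp.1.ne_zero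
  · rw [relindex_conj]
    obtain ⟨k, hk, -⟩ := level_spec p g⁻¹
    rw [hk]
    exact pow_ne_zero k hp.1.ne_zero

lemma norm_sub_mul {u v s t : ℚ_[p]} (h1 : ‖u‖ ≤ 1) (h2 : ‖s‖ ≤ 1) (h3 : ‖v‖ ≤ 1)
    (h4 : ‖t‖ ≤ 1) : ‖u * s - v * t‖ ≤ 1 := by
  rw [sub_eq_add_neg]
  refine le_trans (Padic.nonarchimedean _ _) (max_le ?_ ?_)
  · rw [norm_mul]; exact mul_le_one₀ h1 (norm_nonneg _) h2
  · rw [norm_neg, norm_mul]; exact mul_le_one₀ h3 (norm_nonneg _) h4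

lemma mem_normalizer {h : Heisenberg ℚ_[p]} :
    h ∈ Subgroup.normalizer ((heisenbergInt p) : Set (Heisenberg ℚ_[p])) ↔ ‖h.a‖ ≤ 1 ∧ ‖h.b‖ ≤ 1 := by
  rw [Subgroup.mem_normalizer_iff]
  constructor
  · intro hn
    constructor
    · have h1 := (hn ⟨0, 1, 0⟩).mp (mem_A.mpr ⟨by simp, by simp, by simp⟩)
      rw [conj_eq] at h1
      obtain ⟨-, -, hc⟩ := mem_A.mp h1
      simpa using hc
    · have h1 := (hn ⟨1, 0, 0⟩).mp (mem_A.mpr ⟨by simp, by simp, by simp⟩)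
      rw [conj_eq] at h1
      obtain ⟨-, -, hc⟩ := mem_A.mp h1
      simpa using hc
  · rintro ⟨ha, hb⟩ x
    constructor
    · intro hx
      obtain ⟨hxa, hxb, hxc⟩ := mem_A.mp hx
      rw [conj_eq]
      refine mem_A.mpr ⟨hxa, hxb, ?_⟩
      have hδ : ‖h.a * x.b - h.b * x.a‖ ≤ 1 := norm_sub_mul p ha hxb hb hxa
      have : x.c + h.a * x.b - h.b * x.a = (h.a * x.b - h.b * x.a) + x.c := by ring
      rw [this]
      exact (norm_add_le_one hδ).mpr hxc
    · intro hx
      rw [conj_eq] at hx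
      obtain ⟨hxa, hxb, hxc⟩ := mem_A.mp hx
      refine mem_A.mpr ⟨hxa, hxb, ?_⟩
      have hδ : ‖h.a * x.b - h.b * x.a‖ ≤ 1 := norm_sub_mul p ha hxb hb hxa
      have he : (⟨x.a, x.b, x.c + h.a * x.b - h.b * x.a⟩ : Heisenberg ℚ_[p]).c
          = (h.a * x.b - h.b * x.a) + x.c := by ring
      rw [he] at hxc
      exact (norm_add_le_one hδ).mp hxc

/-- The fibers of the entrywise reduction mod `ℤ_p` on the first two coordinates. -/
def Psi (u : Q p × Q p) : Set (Heisenberg ℚ_[p]) :=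
  {x | mkq p x.a = u.1 ∧ mkq p x.b = u.2}

lemma orbit_eq (g : Heisenberg ℚ_[p]) :
    (fun x => x * g) '' (Subgroup.normalizer ((heisenbergInt p) : Set (Heisenberg ℚ_[p])) : Set (Heisenberg ℚ_[p]))
      = Psi p (mkq p g.a, mkq p g.b) := by
  ext x
  simp only [Set.mem_image, SetLike.mem_coe, Psi, Set.mem_setOf_eq]
  constructor
  · rintro ⟨h, hh, rfl⟩
    obtain ⟨ha, hb⟩ := (mem_normalizer p).mp hh
    constructor
    · rw [mkq_eq_mkq]
      simpa using ha
    · rw [mkq_eq_mkq]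
      simpa using hb
  · rintro ⟨ha, hb⟩
    refine ⟨x * g⁻¹, (mem_normalizer p).mpr ⟨?_, ?_⟩, ?_⟩
    · have := (mkq_eq_mkq p).mp ha
      simpa [sub_eq_add_neg] using this
    · have := (mkq_eq_mkq p).mp hb
      simpa [sub_eq_add_neg] using this
    · show x * g⁻¹ * g = x
      rw [mul_assoc, inv_mul_cancel, mul_one]

lemma Psi_injective : Function.Injective (Psi p) := by
  intro u v huv
  obtain ⟨r, hr⟩ := QuotientAddGroup.mk_surjective u.1
  obtain ⟨s, hs⟩ := QuotientAddGroup.mk_surjective u.2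
  have hx : (⟨r, s, 0⟩ : Heisenberg ℚ_[p]) ∈ Psi p u := ⟨hr, hs⟩
  rw [huv] at hx
  obtain ⟨h1, h2⟩ := hx
  ext
  · rw [← h1]; rw [← hr]
  · rw [← h2]; rw [← hs]

/-- The `p^k`-torsion part of `ℚ_p/ℤ_p`. -/
def SS (k : ℕ) : Set (Q p) := ((rho p (((p : ℚ_[p]) ^ k)⁻¹)).range : Set (Q p))

lemma norm_pk_inv (k : ℕ) : ‖(((p : ℚ_[p]) ^ k)⁻¹)‖ = (p : ℝ) ^ k := by
  rw [norm_inv, norm_pow, Padic.norm_p, ← inv_pow, inv_inv]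

lemma card_SS (k : ℕ) : Nat.card (SS p k) = p ^ k := by
  rw [SS, SetLike.coe_sort_coe]
  exact card_range_rho p (norm_pk_inv p k)

lemma one_le_ppow (k : ℕ) : (1 : ℝ) ≤ (p : ℝ) ^ k :=
  one_le_pow₀ (by exact_mod_cast hp.1.one_le)

lemma mem_SS {k : ℕ} {r : ℚ_[p]} : mkq p r ∈ SS p k ↔ ‖r‖ ≤ (p : ℝ) ^ k := by
  have hppos : (0 : ℝ) < (p : ℝ) := by exact_mod_cast hp.1.pos
  have hpk0 : ((p : ℚ_[p]) ^ k) ≠ 0 := by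
    refine pow_ne_zero k ?_
    exact_mod_cast hp.1.ne_zero
  constructor
  · rintro ⟨t, ht⟩
    have h1 : ‖((p : ℚ_[p]) ^ k)⁻¹ * (t : ℚ_[p]) - r‖ ≤ 1 := (mkq_eq_mkq p).mp ht
    have h2 : ‖((p : ℚ_[p]) ^ k)⁻¹ * (t : ℚ_[p])‖ ≤ (p : ℝ) ^ k := by
      rw [norm_mul, norm_pk_inv]
      calc (p : ℝ) ^ k * ‖(t : ℚ_[p])‖ ≤ (p : ℝ) ^ k * 1 := by
            refine mul_le_mul_of_nonneg_left ?_ (by positivity)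
            rw [PadicInt.padic_norm_e_of_padicInt]
            exact t.2
        _ = (p : ℝ) ^ k := mul_one _
    have h3 : r = ((p : ℚ_[p]) ^ k)⁻¹ * (t : ℚ_[p])
        + -(((p : ℚ_[p]) ^ k)⁻¹ * (t : ℚ_[p]) - r) := by ring
    rw [h3]
    refine le_trans (Padic.nonarchimedean _ _) (max_le h2 ?_)
    rw [norm_neg]
    exact le_trans h1 (one_le_ppow p k)
  · intro h
    have hnorm : ‖((p : ℚ_[p]) ^ k) * r‖ ≤ 1 := by
      rw [norm_mul, norm_pow, Padic.norm_p]
      calc ((p : ℝ))⁻¹ ^ k * ‖r‖ ≤ ((p : ℝ))⁻¹ ^ k * (p : ℝ) ^ k := by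
            refine mul_le_mul_of_nonneg_left h (by positivity)
        _ = 1 := by
            rw [← mul_pow, inv_mul_cancel₀ (ne_of_gt hppos), one_pow]
    refine ⟨⟨((p : ℚ_[p]) ^ k) * r, hnorm⟩, ?_⟩
    show mkq p (((p : ℚ_[p]) ^ k)⁻¹ * (((p : ℚ_[p]) ^ k) * r)) = mkq p r
    congr 1
    field_simp

lemma SS_mono {j k : ℕ} (h : j ≤ k) : SS p j ⊆ SS p k := by
  intro u hu
  obtain ⟨r, hr⟩ := QuotientAddGroup.mk_surjective u
  rw [← hr] at hu ⊢
  rw [mem_SS] at hu ⊢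
  refine le_trans hu (pow_le_pow_right₀ ?_ h)
  exact_mod_cast hp.1.one_le

/-- The relevant "torsion level exactly `n`" subset of `(ℚ_p/ℤ_p)²`. -/
def TT (n : ℕ) : Set (Q p × Q p) := (SS p n ×ˢ SS p n) \ (SS p (n - 1) ×ˢ SS p (n - 1))

lemma commSet_pow {n : ℕ} (hn : 1 ≤ n) (g : Heisenberg ℚ_[p]) :
    g ∈ commSet (heisenbergInt p) (p ^ n) ↔ (mkq p g.a, mkq p g.b) ∈ TT p n := by
  have hp1 : (1 : ℝ) ≤ p := by exact_mod_cast hp.1.one_le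
  obtain ⟨k, hk, hka, hkb, hmin⟩ := level_spec p g
  constructor
  · rintro ⟨-, hidx⟩
    have hkn : k = n := Nat.pow_right_injective hp.1.two_le (hk.symm.trans hidx)
    subst hkn
    constructor
    · exact Set.mem_prod.mpr ⟨(mem_SS p).mpr hka, (mem_SS p).mpr hkb⟩
    · intro hmem
      obtain ⟨h1, h2⟩ := Set.mem_prod.mp hmem
      have := hmin (k - 1) ((mem_SS p).mp h1) ((mem_SS p).mp h2)
      omega
  · rintro ⟨hmem, hnot⟩
    obtain ⟨h1, h2⟩ := Set.mem_prod.mp hmem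
    have hk_le : k ≤ n := hmin n ((mem_SS p).mp h1) ((mem_SS p).mp h2)
    have hkn : k = n := by
      by_contra hne
      have hk1 : k ≤ n - 1 := by omega
      refine hnot (Set.mem_prod.mpr ⟨?_, ?_⟩)
      · exact (mem_SS p).mpr (le_trans hka (pow_le_pow_right₀ hp1 hk1))
      · exact (mem_SS p).mpr (le_trans hkb (pow_le_pow_right₀ hp1 hk1))
    exact ⟨commensurates p g, by rw [hk, hkn]⟩

lemma commOrbits_pow {n : ℕ} (hn : 1 ≤ n) :
    commOrbits (heisenbergInt p) (p ^ n) = Psi p '' TT p n := by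
  ext s
  simp only [commOrbits, Set.mem_setOf_eq, Set.mem_image]
  constructor
  · rintro ⟨g, hg, rfl⟩
    exact ⟨(mkq p g.a, mkq p g.b), (commSet_pow p hn g).mp hg, (orbit_eq p g).symm⟩
  · rintro ⟨⟨u, v⟩, huv, rfl⟩
    obtain ⟨r, hr⟩ := QuotientAddGroup.mk_surjective u
    obtain ⟨t, ht⟩ := QuotientAddGroup.mk_surjective v
    refine ⟨⟨r, t, 0⟩, ?_, ?_⟩
    · refine (commSet_pow p hn _).mpr ?_
      show (mkq p r, mkq p t) ∈ TT p n
      rw [show mkq p r = u from hr, show mkq p t = v from ht]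
      exact huv
    · rw [orbit_eq]
      show Psi p (u, v) = Psi p (mkq p r, mkq p t)
      rw [show mkq p r = u from hr, show mkq p t = v from ht]

lemma card_TT {n : ℕ} (hn : 1 ≤ n) :
    Nat.card (TT p n) = p ^ (2 * n) - p ^ (2 * n - 2) := by
  have hfin : (SS p n).Finite := by
    rw [← Set.not_infinite]
    intro hi
    have := card_SS p n
    rw [Nat.card_coe_set_eq, hi.ncard] at this
    exact (pow_ne_zero n hp.1.ne_zero) this.symm
  have hsub : SS p (n - 1) ×ˢ SS p (n - 1) ⊆ SS p n ×ˢ SS p n :=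
    Set.prod_mono (SS_mono p (by omega)) (SS_mono p (by omega))
  have hcard : ∀ k : ℕ, (SS p k ×ˢ SS p k).ncard = p ^ k * p ^ k := by
    intro k
    rw [← Nat.card_coe_set_eq, Nat.card_congr (Equiv.Set.prod _ _), Nat.card_prod,
      card_SS p k]
  rw [TT, Nat.card_coe_set_eq, Set.ncard_diff hsub ((hfin.prod hfin).subset hsub), hcard, hcard]
  have h1 : p ^ n * p ^ n = p ^ (2 * n) := by rw [← pow_add]; ring_nf
  have h2 : p ^ (n - 1) * p ^ (n - 1) = p ^ (2 * n - 2) := by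
    rw [← pow_add]
    congr 1
    omega
  rw [h1, h2]

end HeisAux

/-- **Local commensurizer growth of the Heisenberg group.** For every prime `p` and
`n ≥ 1`, `c_{p^n}(H(ℤ_p), H(ℚ_p)) = p^{2n}·(1 - p^{-2}) = p^{2n} - p^{2n-2}`; moreover
`c_m(H(ℤ_p), H(ℚ_p)) = 0` whenever `m > 1` is not a power of `p`. -/
theorem heisenberg_local_cCount (p : ℕ) [Fact p.Prime] :
    (∀ n : ℕ, 1 ≤ n →
        cCount (heisenbergInt p) (p ^ n) = p ^ (2 * n) - p ^ (2 * n - 2)) ∧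
      (∀ m : ℕ, 1 < m → (¬ ∃ k : ℕ, m = p ^ k) → cCount (heisenbergInt p) m = 0) := by
  constructor
  · intro n hn
    rw [cCount, HeisAux.commOrbits_pow p hn, Nat.card_coe_set_eq,
      Set.ncard_image_of_injective _ (HeisAux.Psi_injective p),
      ← Nat.card_coe_set_eq, HeisAux.card_TT p hn]
  · intro m hm hnp
    have hempty : commSet (heisenbergInt p) m = ∅ := by
      ext g
      simp only [Set.mem_empty_iff_false, iff_false]
      rintro ⟨-, hidx⟩
      obtain ⟨k, hk, -, -, -⟩ := HeisAux.level_spec p g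
      exact hnp ⟨k, by rw [← hidx, hk]⟩
    have : commOrbits (heisenbergInt p) m = ∅ := by
      ext s
      simp [commOrbits, hempty]
    rw [cCount, this]
    simp
end

section
/- Let T be a uniform tree, G = Aut(T), Γ ⊂ G a torsion-free uniform lattice, Y = Γ\T the quotient graph, and π : T → Y the canonical projection. Then the map φ sending the coset Γg to the composite π∘g is a bijection between the coset space Γ\G and the collection of graph covering maps T → Y. -/
/-- A graph in the sense of Serre: a vertex set `V`, a set `E` of oriented edges with
initial-vertex map `init` and a fixed-point-free involution `bar` (orientation
reversal). This allows loops and multiple edges, as needed for quotient graphs. -/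
structure SGraph : Type 1 where
  V : Type
  E : Type
  init : E → V
  bar : E → E
  bar_invol : ∀ e, bar (bar e) = e
  bar_ne : ∀ e, bar e ≠ e

namespace SGraph

/-- The terminal vertex of an oriented edge. -/
def term (X : SGraph) (e : X.E) : X.V := X.init (X.bar e)

/-- The star of a vertex: the set of oriented edges starting at it. -/
def star (X : SGraph) (v : X.V) : Set X.E := {e : X.E | X.init e = v}

/-- A morphism of graphs. -/
@[ext] structure Hom (X Y : SGraph) where
  fV : X.V → Y.V
  fE : X.E → Y.E
  init_comm : ∀ e, Y.init (fE e) = fV (X.init e)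
  bar_comm : ∀ e, Y.bar (fE e) = fE (X.bar e)

/-- The identity morphism. -/
def Hom.id (X : SGraph) : Hom X X :=
  ⟨fun v => v, fun e => e, fun _ => rfl, fun _ => rfl⟩

/-- Composition of graph morphisms. -/
def Hom.comp {X Y Z : SGraph} (f : Hom Y Z) (g : Hom X Y) : Hom X Z :=
  ⟨f.fV ∘ g.fV, f.fE ∘ g.fE,
    fun e => by simp [Function.comp, f.init_comm, g.init_comm],
    fun e => by simp [Function.comp, f.bar_comm, g.bar_comm]⟩

theorem Hom.comp_assoc {W X Y Z : SGraph} (f : Hom Y Z) (g : Hom X Y) (h : Hom W X) :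
    (f.comp g).comp h = f.comp (g.comp h) := rfl

theorem Hom.comp_id {X Y : SGraph} (f : Hom X Y) : f.comp (Hom.id X) = f := rfl

theorem Hom.id_comp {X Y : SGraph} (f : Hom X Y) : (Hom.id Y).comp f = f := rfl

/-- A graph morphism is a covering map if it is a local bijection, i.e. restricts to a
bijection from the star of each vertex onto the star of its image. -/
def Hom.IsCovering {X Y : SGraph} (f : Hom X Y) : Prop :=
  ∀ v : X.V, Set.BijOn f.fE (X.star v) (Y.star (f.fV v))

/-- An automorphism of a graph. -/
@[ext] structure Aut (X : SGraph) where
  toHom : Hom X X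
  invHom : Hom X X
  left_inv : toHom.comp invHom = Hom.id X
  right_inv : invHom.comp toHom = Hom.id X

namespace Aut

variable {X : SGraph}

instance : Mul (Aut X) :=
  ⟨fun a b =>
    ⟨a.toHom.comp b.toHom, b.invHom.comp a.invHom, by
      rw [Hom.comp_assoc, ← Hom.comp_assoc b.toHom, b.left_inv, Hom.id_comp, a.left_inv], by
      rw [Hom.comp_assoc, ← Hom.comp_assoc a.invHom, a.right_inv, Hom.id_comp, b.right_inv]⟩⟩

instance : One (Aut X) := ⟨⟨Hom.id X, Hom.id X, rfl, rfl⟩⟩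

instance : Inv (Aut X) := ⟨fun a => ⟨a.invHom, a.toHom, a.right_inv, a.left_inv⟩⟩

@[simp] theorem mul_toHom (a b : Aut X) : (a * b).toHom = a.toHom.comp b.toHom := rfl
@[simp] theorem mul_invHom (a b : Aut X) : (a * b).invHom = b.invHom.comp a.invHom := rfl
@[simp] theorem one_toHom : (1 : Aut X).toHom = Hom.id X := rfl
@[simp] theorem one_invHom : (1 : Aut X).invHom = Hom.id X := rfl
@[simp] theorem inv_toHom (a : Aut X) : a⁻¹.toHom = a.invHom := rfl
@[simp] theorem inv_invHom (a : Aut X) : a⁻¹.invHom = a.toHom := rfl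

instance : Group (Aut X) where
  mul_assoc a b c := rfl
  one_mul a := rfl
  mul_one a := rfl
  inv_mul_cancel a := by
    refine Aut.ext ?_ ?_
    · simpa using a.right_inv
    · simpa using a.right_inv

/-- Automorphisms act on the vertices of a graph. -/
instance : MulAction (Aut X) X.V where
  smul a v := a.toHom.fV v
  one_smul v := rfl
  mul_smul a b v := rfl

/-- Automorphisms act on the edges of a graph. -/
instance : MulAction (Aut X) X.E where
  smul a e := a.toHom.fE e
  one_smul e := rfl
  mul_smul a b e := rfl

@[simp] theorem smul_V_def (a : Aut X) (v : X.V) : a • v = a.toHom.fV v := rfl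
@[simp] theorem smul_E_def (a : Aut X) (e : X.E) : a • e = a.toHom.fE e := rfl

end Aut

/-- A graph is connected if any two vertices are joined by an edge path. -/
def Connected (X : SGraph) : Prop :=
  ∀ u v : X.V,
    Relation.ReflTransGen (fun x y : X.V => ∃ e : X.E, X.init e = x ∧ X.term e = y) u v

/-- A graph is a tree if it is nonempty, connected, and has no reduced closed edge path
of positive length. -/
def IsTreeS (X : SGraph) : Prop :=
  Nonempty X.V ∧ Connected X ∧
    ∀ (n : ℕ) (c : Fin (n + 1) → X.E),
      (∀ i : Fin n, X.init (c i.succ) = X.term (c i.castSucc)) →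
      (∀ i : Fin n, c i.succ ≠ X.bar (c i.castSucc)) →
      X.term (c (Fin.last n)) ≠ X.init (c 0)

/-- A graph is locally finite if all its stars are finite, and finite if it has finitely
many vertices and edges. -/
def LocallyFiniteS (X : SGraph) : Prop := ∀ v : X.V, (X.star v).Finite

variable (X : SGraph) (Γ : Subgroup (Aut X))

/-- The quotient graph `Γ\X` of a graph `X` by a subgroup `Γ ≤ Aut(X)` acting without
inversions (`hni`): vertices are `Γ`-orbits of vertices, edges are `Γ`-orbits of
oriented edges. -/
def quotSG (hni : ∀ (γ : ↥Γ) (e : X.E), (γ : Aut X) • e ≠ X.bar e) : SGraph where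
  V := Quotient (MulAction.orbitRel ↥Γ X.V)
  E := Quotient (MulAction.orbitRel ↥Γ X.E)
  init := Quotient.lift (fun e => (⟦X.init e⟧ : Quotient (MulAction.orbitRel ↥Γ X.V)))
    (by
      rintro e e' ⟨γ, rfl⟩
      exact Quotient.sound ⟨γ, ((γ : Aut X).toHom.init_comm e').symm⟩)
  bar := Quotient.lift (fun e => (⟦X.bar e⟧ : Quotient (MulAction.orbitRel ↥Γ X.E)))
    (by
      rintro e e' ⟨γ, rfl⟩
      refine Quotient.sound ⟨γ, ?_⟩
      exact ((γ : Aut X).toHom.bar_comm e').symm)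
  bar_invol := by
    rintro ⟨e⟩
    exact congrArg (Quotient.mk _) (X.bar_invol e)
  bar_ne := by
    rintro ⟨e⟩ h
    obtain ⟨γ, hγ⟩ := Quotient.exact h
    exact hni γ e hγ

/-- The canonical projection `X → Γ\X`. -/
def quotHom (hni : ∀ (γ : ↥Γ) (e : X.E), (γ : Aut X) • e ≠ X.bar e) :
    Hom X (quotSG X Γ hni) :=
  ⟨fun v => ⟦v⟧, fun e => ⟦e⟧, fun _ => rfl, fun _ => rfl⟩

end SGraph

open SGraph
namespace SGraph

variable {X Y : SGraph}

/-- Edge paths (chains) in a Serre graph. -/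
inductive SChain (X : SGraph) : X.V → List X.E → X.V → Prop
  | nil (v : X.V) : SChain X v [] v
  | cons {u v : X.V} (e : X.E) {l : List X.E} (he : X.init e = u)
      (h : SChain X (X.term e) l v) : SChain X u (e :: l) v

/-- A chain is reduced if it has no backtracking. -/
def Reduced (X : SGraph) (l : List X.E) : Prop := l.Chain' (fun a b => b ≠ X.bar a)

theorem SChain.eq_of_nil {u v : X.V} (h : SChain X u [] v) : u = v := by
  cases h; rfl

theorem SChain.append {u v w : X.V} {l₁ l₂ : List X.E} (h₁ : SChain X u l₁ v)
    (h₂ : SChain X v l₂ w) : SChain X u (l₁ ++ l₂) w := by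
  induction h₁ with
  | nil => exact h₂
  | cons e he _ ih => exact SChain.cons e he (ih h₂)

theorem SChain.split {u w : X.V} {l₁ l₂ : List X.E} (h : SChain X u (l₁ ++ l₂) w) :
    ∃ v, SChain X u l₁ v ∧ SChain X v l₂ w := by
  induction l₁ generalizing u with
  | nil => exact ⟨u, SChain.nil u, h⟩
  | cons e t ih =>
    cases h with
    | cons _ he h' =>
      obtain ⟨v, hv1, hv2⟩ := ih h'
      exact ⟨v, SChain.cons e he hv1, hv2⟩

theorem chain_of_connected (hc : X.Connected) (u v : X.V) : ∃ l, SChain X u l v := by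
  induction hc u v with
  | refl => exact ⟨[], SChain.nil u⟩
  | tail _ step ih =>
    obtain ⟨l, hl⟩ := ih
    obtain ⟨e, he1, he2⟩ := step
    exact ⟨l ++ [e], hl.append (he2 ▸ SChain.cons e he1 (SChain.nil _))⟩

theorem SChain.init_head {u v : X.V} {e : X.E} {l : List X.E}
    (h : SChain X u (e :: l) v) : X.init e = u := by cases h; assumption

theorem SChain.tail' {u v : X.V} {e : X.E} {l : List X.E}
    (h : SChain X u (e :: l) v) : SChain X (X.term e) l v := by cases h; assumption

theorem SChain.get_init {u v : X.V} {l : List X.E} (h : SChain X u l v) (i : ℕ)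
    (hi : i + 1 < l.length) :
    X.init (l.get ⟨i + 1, hi⟩) = X.term (l.get ⟨i, Nat.lt_of_succ_lt hi⟩) := by
  induction h generalizing i with
  | nil => simp at hi
  | @cons u v e t he h ih =>
    match i with
    | 0 =>
      simp only [List.get]
      have ht : t ≠ [] := by
        intro hh; subst hh; simp at hi
      match t, ht, h with
      | e' :: t', _, h => exact h.init_head
    | i + 1 =>
      simpa using ih i (by simpa using hi)

theorem SChain.term_getLast {u v : X.V} {l : List X.E} (h : SChain X u l v)
    (hne : l ≠ []) : X.term (l.getLast hne) = v := by
  induction h with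
  | nil => exact absurd rfl hne
  | @cons u v e t he h ih =>
    match t, h with
    | [], h => simpa [List.getLast] using h.eq_of_nil
    | e' :: t', h => simpa [List.getLast] using ih (by simp)

/-- In a tree, a reduced closed chain is trivial. -/
theorem IsTreeS.no_cycle (ht : X.IsTreeS) {v : X.V} {l : List X.E}
    (h : SChain X v l v) (hr : Reduced X l) : l = [] := by
  by_contra hne
  match l, hne with
  | e :: t, _ =>
    set n := t.length with hn
    set c : Fin (n + 1) → X.E := fun i => (e :: t).get ⟨i.val, by simp only [List.length_cons]; omega⟩ with hc
    have h1 : ∀ i : Fin n, X.init (c i.succ) = X.term (c i.castSucc) := fun i =>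
      h.get_init i.val (by simp only [List.length_cons]; exact Nat.succ_lt_succ i.is_lt)
    have h2 : ∀ i : Fin n, c i.succ ≠ X.bar (c i.castSucc) := fun i =>
      List.isChain_iff_getElem.mp hr i.val (by simp only [List.length_cons]; omega)
    have hkey : X.term (c (Fin.last n)) = X.init (c 0) := by
      have h0 : X.init (c 0) = v := h.init_head
      have hlast := h.term_getLast (l := e :: t) (by simp)
      rw [List.getLast_eq_getElem] at hlast
      rw [h0]
      exact hlast
    exact ht.2.2 n c h1 h2 hkey

end SGraph
namespace SGraph

variable {X Y : SGraph}

/-- Terminal vertices commute with morphisms. -/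
theorem Hom.term_comm (f : Hom X Y) (e : X.E) : Y.term (f.fE e) = f.fV (X.term e) := by
  show Y.init (Y.bar (f.fE e)) = f.fV (X.init (X.bar e))
  rw [f.bar_comm, f.init_comm]

/-- Morphisms map chains to chains. -/
theorem SChain.map (f : Hom X Y) {u v : X.V} {l : List X.E} (h : SChain X u l v) :
    SChain Y (f.fV u) (l.map f.fE) (f.fV v) := by
  induction h with
  | nil => exact SChain.nil _
  | cons e he h ih =>
    refine SChain.cons (f.fE e) (by rw [f.init_comm, he]) ?_
    rw [f.term_comm]
    exact ih

/-- The reversal of a chain. -/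
def rb (X : SGraph) (l : List X.E) : List X.E := (l.map X.bar).reverse

theorem SChain.rb {u v : X.V} {l : List X.E} (h : SChain X u l v) :
    SChain X v (SGraph.rb X l) u := by
  induction h with
  | nil => exact SChain.nil _
  | @cons u v e t he h ih =>
    have h1 : SChain X (X.term e) [X.bar e] u := by
      refine SChain.cons (X.bar e) rfl ?_
      have : X.term (X.bar e) = u := by
        show X.init (X.bar (X.bar e)) = u
        rw [X.bar_invol]; exact he
      rw [this]; exact SChain.nil u
    show SChain X v ((List.map X.bar (e :: t)).reverse) u
    rw [List.map_cons, List.reverse_cons]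
    exact ih.append h1

theorem Reduced.rb {l : List X.E} (h : Reduced X l) : Reduced X (SGraph.rb X l) := by
  unfold Reduced SGraph.rb
  rw [List.Chain', List.isChain_reverse, List.isChain_map]
  refine h.imp ?_
  intro a b hab hcon
  exact hab (by rw [← X.bar_invol b, hcon])

theorem not_chain'_decomp {α : Type*} {R : α → α → Prop} :
    ∀ l : List α, ¬ l.Chain' R → ∃ a x y b, l = a ++ x :: y :: b ∧ ¬ R x y := by
  intro l hl
  induction l with
  | nil => exact absurd List.isChain_nil hl
  | cons x t ih =>
    match t with
    | [] => exact absurd (List.isChain_singleton x) hl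
    | y :: t' =>
      rw [List.Chain', List.isChain_cons_cons] at hl
      by_cases hxy : R x y
      · obtain ⟨a, x', y', b, heq, hR⟩ := ih (fun hc => hl ⟨hxy, hc⟩)
        exact ⟨x :: a, x', y', b, by rw [List.cons_append, ← heq], hR⟩
      · exact ⟨[], x, y, t', rfl, hxy⟩

theorem Reduced.of_cons {e : X.E} {l : List X.E} (h : Reduced X (e :: l)) : Reduced X l :=
  List.IsChain.tail h

theorem exists_reduced_aux (n : ℕ) :
    ∀ {u v : X.V} {l : List X.E}, l.length ≤ n → SChain X u l v →
      ∃ l', SChain X u l' v ∧ Reduced X l' := by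
  induction n with
  | zero =>
    intro u v l hn h
    rw [Nat.le_zero, List.length_eq_zero_iff] at hn
    subst hn
    exact ⟨[], h, List.isChain_nil⟩
  | succ n ih =>
    intro u v l hn h
    by_cases hr : Reduced X l
    · exact ⟨l, h, hr⟩
    · obtain ⟨a, x, y, b, rfl, hR⟩ := not_chain'_decomp l hr
      have hy : y = X.bar x := not_not.mp hR
      obtain ⟨w, hw1, hw2⟩ := h.split
      have hx : X.init x = w := hw2.init_head
      have hb : SChain X w b v := by
        have h2 := hw2.tail'.tail'
        have hterm : X.term y = w := by
          rw [hy]; show X.init (X.bar (X.bar x)) = w; rw [X.bar_invol]; exact hx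
        rwa [hterm] at h2
      exact ih (by simp at hn ⊢; omega) (hw1.append hb)

/-- Existence of reduced chains. -/
theorem exists_reduced {u v : X.V} {l : List X.E} (h : SChain X u l v) :
    ∃ l', SChain X u l' v ∧ Reduced X l' :=
  exists_reduced_aux l.length le_rfl h

theorem rb_concat (e : X.E) (t : List X.E) :
    SGraph.rb X (e :: t) = SGraph.rb X t ++ [X.bar e] := by
  simp [SGraph.rb]

/-- Uniqueness of reduced chains in a tree. -/
theorem reduced_unique (ht : X.IsTreeS) :
    ∀ {l l' : List X.E} {u v : X.V}, SChain X u l v → SChain X u l' v →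
      Reduced X l → Reduced X l' → l = l' := by
  intro l
  induction l with
  | nil =>
    intro l' u v h h' _ hr'
    obtain rfl := h.eq_of_nil
    exact (ht.no_cycle h' hr').symm
  | cons e t ih =>
    intro l' u v h h' hr hr'
    match l' with
    | [] =>
      obtain rfl := h'.eq_of_nil
      exact absurd (ht.no_cycle h hr) (by simp)
    | e' :: t' =>
      by_cases he : e = e'
      · subst he
        have h1 : SChain X (X.term e) t v := h.tail'
        have h2 : SChain X (X.term e) t' v := h'.tail'
        rw [ih h1 h2 hr.of_cons hr'.of_cons]
      · exfalso
        have hC : SChain X v (SGraph.rb X (e :: t) ++ e' :: t') v := h.rb.append h'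
        have hred : Reduced X (SGraph.rb X (e :: t) ++ e' :: t') := by
          rw [Reduced, List.Chain', List.isChain_append]
          refine ⟨hr.rb, hr', ?_⟩
          intro x hx y hy
          rw [rb_concat, List.getLast?_concat, Option.mem_def, Option.some.injEq] at hx
          simp only [List.head?_cons, Option.mem_def, Option.some.injEq] at hy
          subst hx; subst hy
          rw [X.bar_invol]
          exact fun hc => he hc.symm
        have := ht.no_cycle hC hred
        simp [rb_concat] at this

end SGraph
namespace SGraph

variable {X X' Y : SGraph}

open Classical in
/-- Lift a chain of edges through a morphism, step by step. -/
noncomputable def liftV (p : Hom X' Y) : List Y.E → X'.V → X'.V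
  | [], w => w
  | ε :: L, w =>
    if h : ∃ e, X'.init e = w ∧ p.fE e = ε then liftV p L (X'.term h.choose) else w

theorem liftV_nil (p : Hom X' Y) (w : X'.V) : liftV p [] w = w := rfl

open Classical in
theorem liftV_cons (p : Hom X' Y) (ε : Y.E) (L : List Y.E) (w : X'.V) :
    liftV p (ε :: L) w =
      if h : ∃ e, X'.init e = w ∧ p.fE e = ε then liftV p L (X'.term h.choose) else w := rfl

theorem lift_edge_exists {p : Hom X' Y} (hp : p.IsCovering) {w : X'.V} {ε : Y.E}
    (hε : Y.init ε = p.fV w) : ∃ e, X'.init e = w ∧ p.fE e = ε := by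
  obtain ⟨e, he, hpe⟩ := (hp w).2.2 (show ε ∈ Y.star (p.fV w) from hε)
  exact ⟨e, he, hpe⟩

theorem liftV_proj {p : Hom X' Y} (hp : p.IsCovering) :
    ∀ {L : List Y.E} {w : X'.V} {y : Y.V}, SChain Y (p.fV w) L y →
      p.fV (liftV p L w) = y := by
  intro L
  induction L with
  | nil => intro w y h; exact h.eq_of_nil
  | cons ε L ih =>
    intro w y h
    have hex := lift_edge_exists hp h.init_head
    rw [liftV_cons, dif_pos hex]
    refine ih ?_
    have : p.fV (X'.term hex.choose) = Y.term ε := by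
      rw [← p.term_comm, hex.choose_spec.2]
    rw [this]
    exact h.tail'

theorem liftV_append {p : Hom X' Y} (hp : p.IsCovering) :
    ∀ {L₁ : List Y.E} {w : X'.V} {y : Y.V}, SChain Y (p.fV w) L₁ y → ∀ (L₂ : List Y.E),
      liftV p (L₁ ++ L₂) w = liftV p L₂ (liftV p L₁ w) := by
  intro L₁
  induction L₁ with
  | nil => intro w y h L₂; rfl
  | cons ε L ih =>
    intro w y h L₂
    have hex := lift_edge_exists hp h.init_head
    rw [List.cons_append, liftV_cons, liftV_cons, dif_pos hex, dif_pos hex]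
    refine ih (y := y) ?_ L₂
    have : p.fV (X'.term hex.choose) = Y.term ε := by
      rw [← p.term_comm, hex.choose_spec.2]
    rw [this]
    exact h.tail'

theorem liftV_single {p : Hom X' Y} (hp : p.IsCovering) {w : X'.V} {e : X'.E}
    (he : X'.init e = w) : liftV p [p.fE e] w = X'.term e := by
  have hex : ∃ e', X'.init e' = w ∧ p.fE e' = p.fE e := ⟨e, he, rfl⟩
  rw [liftV_cons, dif_pos hex, liftV_nil]
  congr 1
  exact (hp w).2.1 hex.choose_spec.1 he hex.choose_spec.2

theorem liftV_backtrack {p : Hom X' Y} (hp : p.IsCovering) {w : X'.V} {ε : Y.E}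
    (hε : Y.init ε = p.fV w) : liftV p [ε, Y.bar ε] w = w := by
  have hex := lift_edge_exists hp hε
  rw [liftV_cons, dif_pos hex]
  set e₀ := hex.choose with he₀
  have hsp := hex.choose_spec
  have hbar : p.fE (X'.bar e₀) = Y.bar ε := by
    rw [← p.bar_comm, hsp.2]
  have : liftV p [Y.bar ε] (X'.term e₀) = X'.term (X'.bar e₀) := by
    rw [← hbar]
    exact liftV_single hp rfl
  rw [this]
  show X'.init (X'.bar (X'.bar e₀)) = w
  rw [X'.bar_invol]
  exact hsp.1

section LiftExists

variable {f : Hom X Y} {p : Hom X' Y}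

theorem liftEnd_backtrack {v0 v : X.V} {w0 : X'.V} (hp : p.IsCovering)
    (hw : p.fV w0 = f.fV v0) (a b : List X.E) (e : X.E)
    (h : SChain X v0 (a ++ e :: X.bar e :: b) v) :
    SChain X v0 (a ++ b) v ∧
      liftV p ((a ++ b).map f.fE) w0 = liftV p ((a ++ e :: X.bar e :: b).map f.fE) w0 := by
  obtain ⟨w1, ha, hrest⟩ := h.split
  have he : X.init e = w1 := hrest.init_head
  have hb : SChain X w1 b v := by
    have h2 := hrest.tail'.tail'
    have : X.term (X.bar e) = w1 := by
      show X.init (X.bar (X.bar e)) = w1; rw [X.bar_invol]; exact he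
    rwa [this] at h2
  have hA : SChain Y (p.fV w0) (a.map f.fE) (f.fV w1) := by
    rw [hw]; exact ha.map f
  set wA := liftV p (a.map f.fE) w0 with hwA
  have hpwA : p.fV wA = f.fV w1 := liftV_proj hp hA
  have h1 : Y.init (f.fE e) = p.fV wA := by rw [hpwA, f.init_comm, he]
  constructor
  · exact ha.append hb
  · have hmap : (a ++ e :: X.bar e :: b).map f.fE =
        a.map f.fE ++ ([f.fE e, Y.bar (f.fE e)] ++ b.map f.fE) := by
      simp [f.bar_comm]
    rw [hmap, List.map_append, liftV_append hp hA, liftV_append hp hA, ← hwA]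
    have hM : SChain Y (p.fV wA) [f.fE e, Y.bar (f.fE e)] (p.fV wA) := by
      refine SChain.cons _ h1 (SChain.cons _ rfl ?_)
      have : Y.term (Y.bar (f.fE e)) = p.fV wA := by
        show Y.init (Y.bar (Y.bar (f.fE e))) = p.fV wA
        rw [Y.bar_invol]; exact h1
      rw [this]; exact SChain.nil _
    rw [liftV_append hp hM, liftV_backtrack hp h1]

theorem liftEnd_indep (ht : X.IsTreeS) (hp : p.IsCovering) {v0 : X.V} {w0 : X'.V}
    (hw : p.fV w0 = f.fV v0) :
    ∀ (n : ℕ) {l l' : List X.E} {v : X.V}, l.length + l'.length ≤ n →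
      SChain X v0 l v → SChain X v0 l' v →
      liftV p (l.map f.fE) w0 = liftV p (l'.map f.fE) w0 := by
  intro n
  induction n with
  | zero =>
    intro l l' v hn h h'
    rw [Nat.le_zero, Nat.add_eq_zero] at hn
    rw [List.length_eq_zero_iff] at hn
    obtain ⟨rfl, h2⟩ := hn
    rw [List.length_eq_zero_iff] at h2
    subst h2
    rfl
  | succ n ih =>
    intro l l' v hn h h'
    by_cases hr : Reduced X l
    · by_cases hr' : Reduced X l'
      · rw [reduced_unique ht h h' hr hr']
      · obtain ⟨a, x, y, b, rfl, hR⟩ := not_chain'_decomp l' hr'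
        obtain rfl : y = X.bar x := not_not.mp hR
        obtain ⟨hab, heq⟩ := liftEnd_backtrack hp hw a b x h'
        rw [← heq]
        refine ih ?_ h hab
        simp only [List.length_append, List.length_cons] at hn ⊢
        omega
    · obtain ⟨a, x, y, b, rfl, hR⟩ := not_chain'_decomp l hr
      obtain rfl : y = X.bar x := not_not.mp hR
      obtain ⟨hab, heq⟩ := liftEnd_backtrack hp hw a b x h
      rw [← heq]
      refine ih ?_ hab h'
      simp only [List.length_append, List.length_cons] at hn ⊢
      omega

/-- Existence of lifts of morphisms from a tree through a covering. -/
theorem lift_exists (ht : X.IsTreeS) (hp : p.IsCovering) (f : Hom X Y)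
    (v0 : X.V) (w0 : X'.V) (hw : p.fV w0 = f.fV v0) :
    ∃ g : Hom X X', p.comp g = f ∧ g.fV v0 = w0 := by
  have hchain : ∀ v, ∃ l, SChain X v0 l v := fun v => chain_of_connected ht.2.1 v0 v
  choose c hc using hchain
  set gV : X.V → X'.V := fun v => liftV p ((c v).map f.fE) w0 with hgV
  have hkey : ∀ (v) (l), SChain X v0 l v → liftV p (l.map f.fE) w0 = gV v := by
    intro v l hl
    exact liftEnd_indep (f := f) ht hp hw (l.length + (c v).length) le_rfl hl (hc v)
  have hproj : ∀ v, p.fV (gV v) = f.fV v := by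
    intro v
    refine liftV_proj hp ?_
    rw [hw]
    exact (hc v).map f
  have hEex : ∀ e : X.E, ∃ e', X'.init e' = gV (X.init e) ∧ p.fE e' = f.fE e := by
    intro e
    refine lift_edge_exists hp ?_
    rw [hproj, f.init_comm]
  set gE : X.E → X'.E := fun e => (hEex e).choose with hgE
  have hgE1 : ∀ e, X'.init (gE e) = gV (X.init e) := fun e => (hEex e).choose_spec.1
  have hgE2 : ∀ e, p.fE (gE e) = f.fE e := fun e => (hEex e).choose_spec.2
  have hterm : ∀ e, gV (X.term e) = X'.term (gE e) := by
    intro e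
    have h1 : SChain X v0 (c (X.init e) ++ [e]) (X.term e) :=
      (hc (X.init e)).append (SChain.cons e rfl (SChain.nil _))
    rw [← hkey _ _ h1, List.map_append]
    rw [liftV_append hp (by rw [hw]; exact (hc (X.init e)).map f)]
    have : liftV p ((c (X.init e)).map f.fE) w0 = gV (X.init e) := rfl
    rw [this, List.map_singleton, ← hgE2 e]
    exact liftV_single hp (hgE1 e)
  have hbar : ∀ e, X'.bar (gE e) = gE (X.bar e) := by
    intro e
    have m1 : X'.init (X'.bar (gE e)) = gV (X.term e) := by
      show X'.term (gE e) = gV (X.term e)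
      exact (hterm e).symm
    have m2 : X'.init (gE (X.bar e)) = gV (X.term e) := hgE1 (X.bar e)
    refine (hp (gV (X.term e))).2.1 m1 m2 ?_
    rw [hgE2, ← p.bar_comm, hgE2, f.bar_comm]
  refine ⟨⟨gV, gE, fun e => hgE1 e, hbar⟩, ?_, ?_⟩
  · refine Hom.ext ?_ ?_
    · funext v; exact hproj v
    · funext e; exact hgE2 e
  · exact (hkey v0 [] (SChain.nil v0)).symm
end LiftExists

end SGraph
namespace SGraph

variable {X X' Y : SGraph}

/-- Uniqueness of lifts through a covering, over a connected domain. -/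
theorem lift_unique (hc : X.Connected) {p : Hom X' Y} (hp : p.IsCovering)
    {h₁ h₂ : Hom X X'} (hpp : p.comp h₁ = p.comp h₂) {v0 : X.V}
    (h0 : h₁.fV v0 = h₂.fV v0) : h₁ = h₂ := by
  have hpE : ∀ e, p.fE (h₁.fE e) = p.fE (h₂.fE e) := by
    intro e
    have := congrArg Hom.fE hpp
    exact congrFun this e
  have hE : ∀ e : X.E, h₁.fV (X.init e) = h₂.fV (X.init e) → h₁.fE e = h₂.fE e := by
    intro e hv
    refine (hp (h₁.fV (X.init e))).2.1 (h₁.init_comm e) ?_ (hpE e)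
    show X'.init (h₂.fE e) = h₁.fV (X.init e)
    rw [h₂.init_comm, hv]
  have hV : ∀ v, h₁.fV v = h₂.fV v := by
    intro v
    induction hc v0 v with
    | refl => exact h0
    | tail _ step ih =>
      obtain ⟨e, he1, he2⟩ := step
      have hee := hE e (by rw [he1]; exact ih)
      subst he2
      rw [← h₁.term_comm, ← h₂.term_comm, hee]
  refine Hom.ext (funext hV) (funext fun e => hE e (hV (X.init e)))

/-- If `p ∘ g` and `p` are coverings, so is `g`. -/
theorem covering_cancel {p : Hom X' Y} {g : Hom X X'} (hp : p.IsCovering)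
    (hpg : (p.comp g).IsCovering) : g.IsCovering := by
  intro v
  refine ⟨fun e he => ?_, ?_, ?_⟩
  · have he' : X.init e = v := he
    show X'.init (g.fE e) = g.fV v
    rw [g.init_comm, he']
  · intro e₁ h₁ e₂ h₂ heq
    exact (hpg v).2.1 h₁ h₂ (by show p.fE (g.fE e₁) = p.fE (g.fE e₂); rw [heq])
  · intro e' he'
    have hpe' : p.fE e' ∈ Y.star ((p.comp g).fV v) := by
      show Y.init (p.fE e') = p.fV (g.fV v)
      rw [p.init_comm, he']
    obtain ⟨e, he, heq⟩ := (hpg v).2.2 hpe'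
    refine ⟨e, he, ?_⟩
    refine (hp (g.fV v)).2.1 ?_ he' heq
    show X'.init (g.fE e) = g.fV v
    rw [g.init_comm, he]

/-- Local injections map reduced chains to reduced chains. -/
theorem Reduced.map_covering {g : Hom X X'} (hg : g.IsCovering) :
    ∀ {u v : X.V} {l : List X.E}, SChain X u l v → Reduced X l →
      Reduced X' (l.map g.fE) := by
  intro u v l h hr
  induction h with
  | nil => exact List.isChain_nil
  | @cons u v e t he h ih =>
    rw [List.map_cons, Reduced, List.Chain', List.isChain_cons]
    refine ⟨?_, ih hr.of_cons⟩
    intro y hy hcon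
    match t, h, hy with
    | e₂ :: t₂, h, hy =>
      simp only [List.map_cons, List.head?_cons, Option.mem_def, Option.some.injEq] at hy
      subst hy
      have h2 : g.fE e₂ = g.fE (X.bar e) := by rw [hcon, g.bar_comm]
      have m1 : e₂ ∈ X.star (X.term e) := h.init_head
      have m2 : X.bar e ∈ X.star (X.term e) := rfl
      have := (hg (X.term e)).2.1 m1 m2 h2
      rw [Reduced, List.Chain', List.isChain_cons_cons] at hr
      exact hr.1 this

/-- A self-covering of a tree is bijective. -/
theorem covering_self_bijective (ht : X.IsTreeS) {g : Hom X X} (hg : g.IsCovering) :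
    Function.Bijective g.fV ∧ Function.Bijective g.fE := by
  have hVinj : Function.Injective g.fV := by
    intro u u' huu
    obtain ⟨l, hl⟩ := chain_of_connected ht.2.1 u u'
    obtain ⟨l', hl', hr'⟩ := exists_reduced hl
    have hmap : SChain X (g.fV u) (l'.map g.fE) (g.fV u) := by
      have := hl'.map g
      rwa [← huu] at this
    have := ht.no_cycle hmap (Reduced.map_covering hg hl' hr')
    rw [List.map_eq_nil_iff] at this
    subst this
    exact hl'.eq_of_nil
  have hVsurj : Function.Surjective g.fV := by
    obtain ⟨v0⟩ := ht.1
    intro w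
    have key : ∀ w', Relation.ReflTransGen
        (fun x y : X.V => ∃ e : X.E, X.init e = x ∧ X.term e = y) (g.fV v0) w' →
        ∃ v, g.fV v = w' := by
      intro w' hrel
      induction hrel with
      | refl => exact ⟨v0, rfl⟩
      | tail _ step ih =>
        obtain ⟨v, rfl⟩ := ih
        obtain ⟨e, he1, he2⟩ := step
        obtain ⟨a, ha, haeq⟩ := (hg v).2.2 (show e ∈ X.star (g.fV v) from he1)
        exact ⟨X.term a, by rw [← g.term_comm, haeq, he2]⟩
    exact key w (ht.2.1 (g.fV v0) w)
  have hEinj : Function.Injective g.fE := by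
    intro e e' heq
    have hv : X.init e = X.init e' := by
      refine hVinj ?_
      rw [← g.init_comm, ← g.init_comm, heq]
    exact (hg (X.init e)).2.1 rfl hv.symm heq
  have hEsurj : Function.Surjective g.fE := by
    intro e'
    obtain ⟨v, hv⟩ := hVsurj (X.init e')
    obtain ⟨e, _, heq⟩ := (hg v).2.2 (show X.init e' = g.fV v from hv.symm)
    exact ⟨e, heq⟩
  exact ⟨⟨hVinj, hVsurj⟩, ⟨hEinj, hEsurj⟩⟩

/-- A bijective endomorphism gives an automorphism. -/
theorem exists_aut_of_bijective {g : Hom X X} (hV : Function.Bijective g.fV)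
    (hE : Function.Bijective g.fE) : ∃ a : Aut X, a.toHom = g := by
  set eV := Equiv.ofBijective g.fV hV with heV
  set eE := Equiv.ofBijective g.fE hE with heE
  have einit : ∀ ε, X.init (eE.symm ε) = eV.symm (X.init ε) := by
    intro ε
    refine hV.1 ?_
    rw [← g.init_comm]
    show X.init (eE (eE.symm ε)) = eV (eV.symm (X.init ε))
    rw [Equiv.apply_symm_apply, Equiv.apply_symm_apply]
  have ebar : ∀ ε, X.bar (eE.symm ε) = eE.symm (X.bar ε) := by
    intro ε
    refine hE.1 ?_
    show g.fE (X.bar (eE.symm ε)) = eE (eE.symm (X.bar ε))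
    rw [Equiv.apply_symm_apply, ← g.bar_comm]
    show X.bar (eE (eE.symm ε)) = X.bar ε
    rw [Equiv.apply_symm_apply]
  set gi : Hom X X := ⟨eV.symm, eE.symm, einit, ebar⟩ with hgi
  have hleft : g.comp gi = Hom.id X := by
    refine Hom.ext ?_ ?_
    · funext v; exact eV.apply_symm_apply v
    · funext e; exact eE.apply_symm_apply e
  have hright : gi.comp g = Hom.id X := by
    refine Hom.ext ?_ ?_
    · funext v; exact eV.symm_apply_apply v
    · funext e; exact eE.symm_apply_apply e
  exact ⟨⟨g, gi, hleft, hright⟩, rfl⟩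

/-- Automorphisms are determined by their forward morphism. -/
theorem Aut.toHom_injective {a b : Aut X} (h : a.toHom = b.toHom) : a = b := by
  refine Aut.ext h ?_
  calc a.invHom = a.invHom.comp (b.toHom.comp b.invHom) := by rw [b.left_inv, Hom.comp_id]
    _ = (a.invHom.comp a.toHom).comp b.invHom := by rw [← Hom.comp_assoc, h]
    _ = b.invHom := by rw [a.right_inv, Hom.id_comp]

/-- Automorphisms give bijections of stars. -/
theorem Aut.star_bijOn (a : Aut X) (v : X.V) :
    Set.BijOn a.toHom.fE (X.star v) (X.star (a.toHom.fV v)) := by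
  refine ⟨fun e he => ?_, ?_, ?_⟩
  · have he' : X.init e = v := he
    show X.init (a.toHom.fE e) = a.toHom.fV v
    rw [a.toHom.init_comm, he']
  · intro e₁ _ e₂ _ heq
    have := congrArg a.invHom.fE heq
    have hr : ∀ e, a.invHom.fE (a.toHom.fE e) = e := fun e =>
      congrFun (congrArg Hom.fE a.right_inv) e
    rwa [hr, hr] at this
  · intro e' he'
    refine ⟨a.invHom.fE e', ?_, congrFun (congrArg Hom.fE a.left_inv) e'⟩
    show X.init (a.invHom.fE e') = v
    rw [a.invHom.init_comm, he']
    exact congrFun (congrArg Hom.fV a.right_inv) v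

end SGraph
namespace SGraph

variable (X : SGraph) (Γ : Subgroup (Aut X))

theorem quotHom_covering (hfree : ∀ (γ : ↥Γ) (v : X.V), (γ : Aut X) • v = v → γ = 1)
    (hni : ∀ (γ : ↥Γ) (e : X.E), (γ : Aut X) • e ≠ X.bar e) :
    (quotHom X Γ hni).IsCovering := by
  have initsmul : ∀ (δ : ↥Γ) (e : X.E), X.init ((δ : Aut X).toHom.fE e) =
      (δ : Aut X).toHom.fV (X.init e) := fun δ e => (δ : Aut X).toHom.init_comm e
  intro v
  refine ⟨?_, ?_, ?_⟩
  · intro e he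
    have he' : X.init e = v := he
    show (⟦X.init e⟧ : Quotient (MulAction.orbitRel ↥Γ X.V)) = ⟦v⟧
    rw [he']
  · intro e₁ h₁ e₂ h₂ heq
    have h₁' : X.init e₁ = v := h₁
    have h₂' : X.init e₂ = v := h₂
    obtain ⟨γ, hγ⟩ := Quotient.exact heq
    have hγ' : (γ : Aut X).toHom.fE e₂ = e₁ := hγ
    have hfix : (γ : Aut X) • v = v := by
      show (γ : Aut X).toHom.fV v = v
      conv_lhs => rw [← h₂']
      rw [← initsmul, hγ', h₁']
    have hone := hfree γ v hfix
    rw [← hγ', hone]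
    rfl
  · intro ε hε
    obtain ⟨e, rfl⟩ := Quotient.exists_rep ε
    have hε' : (⟦X.init e⟧ : Quotient (MulAction.orbitRel ↥Γ X.V)) = ⟦v⟧ := hε
    obtain ⟨γ, hγ⟩ := Quotient.exact hε'
    have hγ' : (γ : Aut X).toHom.fV v = X.init e := hγ
    refine ⟨(γ⁻¹ : ↥Γ) • e, ?_, ?_⟩
    · show X.init (((γ⁻¹ : ↥Γ) : Aut X).toHom.fE e) = v
      rw [initsmul]
      show (γ⁻¹ : ↥Γ) • (X.init e) = v
      rw [← hγ']
      show (γ⁻¹ : ↥Γ) • (γ • v) = v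
      rw [inv_smul_smul]
    · exact Quotient.sound ⟨γ⁻¹, rfl⟩

theorem quot_comp_aut (hni : ∀ (γ : ↥Γ) (e : X.E), (γ : Aut X) • e ≠ X.bar e) (γ : ↥Γ) :
    (quotHom X Γ hni).comp (γ : Aut X).toHom = quotHom X Γ hni := by
  refine Hom.ext ?_ ?_
  · funext v
    exact Quotient.sound ⟨γ, rfl⟩
  · funext e
    exact Quotient.sound ⟨γ, rfl⟩

end SGraph

/-- **Lemma.** Let `T` be a uniform tree (a locally finite tree covering a finite
graph — graphs are understood in the sense of Serre, so that quotient graphs make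
sense), `G = Aut(T)`, and `Γ ⊆ G` a torsion-free uniform lattice: a subgroup acting
freely on the vertices of `T`, without edge inversions (this is exactly freeness plus
torsion-freeness), and with finite quotient graph `Y = Γ\T`; `π : T → Y` denotes the
canonical projection. Then the map `φ : Γg ↦ π ∘ g` is a bijection between the coset
space `Γ\G` and the collection of graph covering maps `T → Y`; explicitly:
`π ∘ g` is a covering map for every `g ∈ G`, every covering map `T → Y` is of the form
`π ∘ g`, and `π ∘ g = π ∘ g'` if and only if `Γ g = Γ g'`. -/
theorem tree_cosets_equiv_coverings (X : SGraph) (htree : X.IsTreeS)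
    (hlf : X.LocallyFiniteS) (Γ : Subgroup (Aut X))
    (hfree : ∀ (γ : ↥Γ) (v : X.V), (γ : Aut X) • v = v → γ = 1)
    (hni : ∀ (γ : ↥Γ) (e : X.E), (γ : Aut X) • e ≠ X.bar e)
    (hquotV : Finite (Quotient (MulAction.orbitRel ↥Γ X.V)))
    (hquotE : Finite (Quotient (MulAction.orbitRel ↥Γ X.E))) :
    (∀ g : Aut X, ((quotHom X Γ hni).comp g.toHom).IsCovering) ∧
    (∀ f : Hom X (quotSG X Γ hni), f.IsCovering →
        ∃ g : Aut X, f = (quotHom X Γ hni).comp g.toHom) ∧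
    (∀ g g' : Aut X,
        (quotHom X Γ hni).comp g.toHom = (quotHom X Γ hni).comp g'.toHom ↔
          ∃ γ ∈ Γ, g' = γ * g) := by

  set Y := quotSG X Γ hni with hY
  set π := quotHom X Γ hni with hπdef
  have hπ : π.IsCovering := quotHom_covering X Γ hfree hni
  refine ⟨?_, ?_, ?_⟩
  · intro g v
    show Set.BijOn (π.fE ∘ g.toHom.fE) (X.star v)
      ((quotSG X Γ hni).star (π.fV (g.toHom.fV v)))
    exact Set.BijOn.comp (hπ (g.toHom.fV v)) (g.star_bijOn v)
  · intro f hf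
    obtain ⟨v0⟩ := htree.1
    have hw : π.fV ((f.fV v0).out) = f.fV v0 := Quotient.out_eq _
    obtain ⟨g, hg, hg0⟩ := lift_exists htree hπ f v0 ((f.fV v0).out) hw
    have hgcov : g.IsCovering := covering_cancel hπ (by rw [hg]; exact hf)
    obtain ⟨hV, hE⟩ := covering_self_bijective htree hgcov
    obtain ⟨a, ha⟩ := exists_aut_of_bijective hV hE
    exact ⟨a, by rw [ha, hg]⟩
  · intro g g'
    constructor
    · intro hpp
      obtain ⟨v0⟩ := htree.1
      have hv0 : (π.comp g'.toHom).fV v0 = (π.comp g.toHom).fV v0 := by rw [hpp]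
      obtain ⟨γ, hγ⟩ := Quotient.exact hv0
      have hγ' : (γ : Aut X).toHom.fV (g.toHom.fV v0) = g'.toHom.fV v0 := hγ
      refine ⟨(γ : Aut X), γ.2, ?_⟩
      refine Aut.toHom_injective ?_
      have hpp2 : π.comp g'.toHom = π.comp ((γ : Aut X) * g).toHom := by
        rw [Aut.mul_toHom, ← Hom.comp_assoc, quot_comp_aut X Γ hni γ, ← hpp]
      exact lift_unique htree.2.1 hπ hpp2 hγ'.symm
    · rintro ⟨γ, hγΓ, rfl⟩
      rw [Aut.mul_toHom, ← Hom.comp_assoc, quot_comp_aut X Γ hni ⟨γ, hγΓ⟩]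
end
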